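/- Let S, I be an SIR solution with initial data (x, y), where x ≥ 0 and y ≥ μ. Then u(x, y) ≤ (x + y)/(γ μ). -/

import Mathlib

open Set Filter Topology

/-- An SIR solution with parameters β, γ and initial data (x, y):
differentiable functions S, I on [0,∞) with S' = -βSI, I' = βSI - γI,
S(0) = x, I(0) = y. -/
def IsSIRSolution (β γ x y : ℝ) (S I : ℝ → ℝ) : Prop :=
  S 0 = x ∧ I 0 = y ∧
  ∀ t, 0 ≤ t →
    HasDerivWithinAt S (-(β * S t * I t)) (Set.Ici 0) t ∧
    HasDerivWithinAt I (β * S t * I t - γ * I t) (Set.Ici 0) t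

theorem stmt_3 (β γ μ x y : ℝ) (hβ : 0 < β) (hγ : 0 < γ) (hμ : 0 < μ)
    (hx : 0 ≤ x) (hy : μ ≤ y)
    (S I : ℝ → ℝ) (hSI : IsSIRSolution β γ x y S I)
    (u : ℝ) (hu : IsLeast {t : ℝ | 0 ≤ t ∧ I t ≤ μ} u) :
    u ≤ (x + y) / (γ * μ) := by
  obtain ⟨hS0, hI0, hderiv⟩ := hSI
  obtain ⟨⟨hu0, hIu⟩, hleast⟩ := hu
  have hγμ : 0 < γ * μ := mul_pos hγ hμ
  rcases eq_or_lt_of_le hu0 with h0 | hupos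
  · rw [← h0]
    apply div_nonneg _ hγμ.le
    linarith
  -- I t > μ for 0 ≤ t < u
  have hIgt : ∀ t, 0 ≤ t → t < u → μ < I t := by
    intro t ht htu
    by_contra h
    exact absurd (hleast ⟨ht, le_of_not_gt h⟩) (not_le.mpr htu)
  -- continuity of S and I on Ici 0
  have hScont : ContinuousOn S (Ici 0) := fun t ht =>
    (hderiv t ht).1.continuousWithinAt
  have hIcont : ContinuousOn I (Ici 0) := fun t ht =>
    (hderiv t ht).2.continuousWithinAt
  have hsub : Icc (0:ℝ) u ⊆ Ici 0 := fun t ht => ht.1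
  -- I u ≥ 0 (in fact ≥ μ) by continuity
  have hIu0 : 0 ≤ I u := by
    have hne : (𝓝[Ioo (0:ℝ) u] u).NeBot := by
      refine mem_closure_iff_nhdsWithin_neBot.mp ?_
      rw [closure_Ioo (ne_of_lt hupos)]
      exact ⟨le_of_lt hupos, le_refl u⟩
    have htend : Tendsto I (𝓝[Ioo (0:ℝ) u] u) (𝓝 (I u)) :=
      ((hIcont u hu0).mono (fun t ht => le_of_lt ht.1)).tendsto
    refine ge_of_tendsto htend ?_
    filter_upwards [self_mem_nhdsWithin] with t ht
    exact le_of_lt (lt_trans hμ (hIgt t (le_of_lt ht.1) ht.2))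
  -- S u ≥ 0 by a Gronwall argument
  have hSu0 : 0 ≤ S u := by
    by_contra h
    push_neg at h
    -- intermediate value: ∃ t₀ ∈ [0,u], S t₀ = 0
    have hiv : (0:ℝ) ∈ S '' Icc 0 u := by
      apply intermediate_value_Icc' hu0 (hScont.mono hsub)
      constructor
      · exact le_of_lt h
      · rw [hS0]; exact hx
    obtain ⟨t₀, ht₀, hSt₀⟩ := hiv
    -- bound on I on [t₀, u]
    obtain ⟨C, hC⟩ := (isCompact_Icc).exists_bound_of_continuousOn
      (hIcont.mono (fun t (ht : t ∈ Icc t₀ u) => le_trans ht₀.1 ht.1))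
    have hC0 : 0 ≤ C := le_trans (norm_nonneg _) (hC u ⟨ht₀.2, le_refl u⟩)
    have key : ∀ t ∈ Icc t₀ u, ‖S t‖ ≤ gronwallBound 0 (β * C) 0 (t - t₀) := by
      apply norm_le_gronwallBound_of_norm_deriv_right_le
        (f' := fun t => -(β * S t * I t))
      · exact hScont.mono (fun t ht => le_trans ht₀.1 ht.1)
      · intro t ht
        exact ((hderiv t (le_trans ht₀.1 ht.1)).1).mono (Ici_subset_Ici.mpr (le_trans ht₀.1 ht.1))
      · rw [hSt₀]; simp
      · intro t ht
        have : ‖-(β * S t * I t)‖ = β * ‖I t‖ * ‖S t‖ := by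
          rw [norm_neg, norm_mul, norm_mul, Real.norm_eq_abs β, abs_of_pos hβ]
          ring
        rw [this, add_zero]
        have h1 : ‖I t‖ ≤ C := hC t ⟨ht.1, le_of_lt ht.2⟩
        have h2 : 0 ≤ ‖S t‖ := norm_nonneg _
        exact mul_le_mul_of_nonneg_right (mul_le_mul_of_nonneg_left h1 hβ.le) h2
    have := key u ⟨ht₀.2, le_refl u⟩
    rw [gronwallBound_ε0_δ0] at this
    have : S u = 0 := by
      have := le_antisymm this (norm_nonneg _)
      simpa using this
    linarith
  -- g t = S t + I t + γ*μ*t is antitone on [0, u]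
  set g : ℝ → ℝ := fun t => S t + I t + γ * μ * t with hg
  have hganti : AntitoneOn g (Icc 0 u) := by
    have hconv : Convex ℝ (Icc (0:ℝ) u) := convex_Icc 0 u
    have hint : interior (Icc (0:ℝ) u) = Ioo 0 u := interior_Icc
    have hgd : ∀ t ∈ Ioo (0:ℝ) u, HasDerivAt g (γ * μ - γ * I t) t := by
      intro t ht
      have hmem : Ici (0:ℝ) ∈ 𝓝 t := Ici_mem_nhds ht.1
      have h1 : HasDerivAt S (-(β * S t * I t)) t :=
        ((hderiv t (le_of_lt ht.1)).1).hasDerivAt hmem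
      have h2 : HasDerivAt I (β * S t * I t - γ * I t) t :=
        ((hderiv t (le_of_lt ht.1)).2).hasDerivAt hmem
      have h3 : HasDerivAt (fun t => γ * μ * t) (γ * μ) t := by
        simpa using (hasDerivAt_id t).const_mul (γ * μ)
      have := (h1.add h2).add h3
      exact this.congr_deriv (by ring)
    apply antitoneOn_of_deriv_nonpos hconv
    · exact ((hScont.mono hsub).add (hIcont.mono hsub)).add
        (Continuous.continuousOn (by continuity))
    · rw [hint]
      exact fun t ht => (hgd t ht).differentiableAt.differentiableWithinAt
    · rw [hint]
      intro t ht
      rw [(hgd t ht).deriv]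
      have := hIgt t (le_of_lt ht.1) ht.2
      nlinarith
  have hgu : g u ≤ g 0 := hganti (left_mem_Icc.mpr hu0) ⟨hu0, le_refl u⟩ hu0
  have : γ * μ * u ≤ x + y := by
    have h0 : g 0 = x + y := by simp [hg, hS0, hI0]
    have hu' : g u = S u + I u + γ * μ * u := rfl
    rw [h0, hu'] at hgu
    linarith
  rw [le_div_iff₀ hγμ]
  linarith
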